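/- For all real numbers α, β with 0 ≤ α ≤ β, there exists a constant c > 0 (depending only on α and β) such that for every integer p ≥ 1 and every real polynomial q in one variable of degree at most p, both ∫_{-1}^{1} (1 - x)^α q(x)² dx ≤ c · p^{2(β−α)} · ∫_{-1}^{1} (1 - x)^β q(x)² dx and ∫_{-1}^{1} (1 + x)^α q(x)² dx ≤ c · p^{2(β−α)} · ∫_{-1}^{1} (1 + x)^β q(x)² dx hold. -/

import Mathlib

open MeasureTheory Polynomial Set

namespace OneSidedBubble

noncomputable section

/-- Compatibility: the complex absolute value as an `AbsoluteValue`, equal to the norm. -/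
def Complex.abs : AbsoluteValue ℂ ℝ where
  toFun := fun z => ‖z‖
  map_mul' := norm_mul
  nonneg' := norm_nonneg
  eq_zero' := fun _ => norm_eq_zero
  add_le' := norm_add_le

lemma Complex.norm_eq_abs (z : ℂ) : ‖z‖ = Complex.abs z := rfl

lemma Complex.abs_ofReal (x : ℝ) : Complex.abs (x : ℂ) = |x| := Complex.norm_real x

lemma Complex.abs_I : Complex.abs Complex.I = 1 := Complex.norm_I

lemma Complex.abs_natCast (n : ℕ) : Complex.abs (n : ℂ) = n := Complex.norm_natCast n

lemma Complex.abs_exp_ofReal_mul_I (x : ℝ) : Complex.abs (Complex.exp (x * Complex.I)) = 1 :=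
  Complex.norm_exp_ofReal_mul_I x

lemma Complex.abs_mul_exp_arg_mul_I (x : ℂ) :
    (Complex.abs x : ℂ) * Complex.exp (Complex.arg x * Complex.I) = x :=
  Complex.norm_mul_exp_arg_mul_I x

/-- The Joukowski companion polynomial of `q` at degree bound `p`. -/
def jouk (q : Polynomial ℝ) (p : ℕ) : Polynomial ℂ :=
  ∑ k ∈ Finset.range (p + 1),
    Polynomial.C ((q.coeff k : ℂ) / 2 ^ k) * Polynomial.X ^ (p - k) *
      (Polynomial.X ^ 2 + 1) ^ k

lemma jouk_eval {q : Polynomial ℝ} {p : ℕ} (hq : q.natDegree ≤ p) {z : ℂ} (hz : z ≠ 0) :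
    (jouk q p).eval z = z ^ p * (Polynomial.aeval ((z + z⁻¹) / 2)) q := by
  have hsum := Polynomial.aeval_eq_sum_range' (S := ℂ) (p := q)
    (n := p + 1) (lt_of_le_of_lt hq (Nat.lt_succ_self p)) ((z + z⁻¹) / 2)
  rw [hsum, jouk, Polynomial.eval_finset_sum, Finset.mul_sum]
  refine Finset.sum_congr rfl fun k hk => ?_
  have hkp : k ≤ p := Nat.lt_succ_iff.mp (Finset.mem_range.mp hk)
  simp only [Polynomial.eval_mul, Polynomial.eval_pow, Polynomial.eval_C, Polynomial.eval_X,
    Polynomial.eval_add, Polynomial.eval_one]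
  rw [Algebra.smul_def]
  have hzp : z ^ (p - k) * z ^ k = z ^ p := by
    rw [← pow_add, Nat.sub_add_cancel hkp]
  have hbase : (z + z⁻¹) / 2 = (z ^ 2 + 1) / (2 * z) := by
    field_simp
  have hmid : ((z + z⁻¹) / 2) ^ k = (z ^ 2 + 1) ^ k / (2 ^ k * z ^ k) := by
    rw [hbase, div_pow, mul_pow]
  rw [hmid]
  have h2 : (2 : ℂ) ^ k ≠ 0 := by
    norm_num
  have hzk : z ^ k ≠ 0 := pow_ne_zero _ hz
  simp only [Complex.coe_algebraMap]
  field_simp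
  rw [← hzp]
  ring

lemma jouk_self_reciprocal {q : Polynomial ℝ} {p : ℕ} (hq : q.natDegree ≤ p) {z : ℂ}
    (hz : z ≠ 0) : (jouk q p).eval z = z ^ (2 * p) * (jouk q p).eval z⁻¹ := by
  have hzi : z⁻¹ ≠ 0 := inv_ne_zero hz
  rw [jouk_eval hq hz, jouk_eval hq hzi, inv_inv]
  have : z⁻¹ + z = z + z⁻¹ := by ring
  rw [this]
  rw [show (2 : ℕ) * p = p + p by ring, pow_add]
  rw [inv_pow]
  field_simp

lemma aeval_real (x : ℝ) (q : Polynomial ℝ) :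
    (Polynomial.aeval ((x : ℂ))) q = ((q.eval x : ℝ) : ℂ) := by
  rw [← Complex.coe_algebraMap, Polynomial.aeval_algebraMap_apply_eq_algebraMap_eval]

variable {q : Polynomial ℝ} {p : ℕ} {M : ℝ}

lemma jouk_circle_eq (hq : q.natDegree ≤ p) (θ : ℝ) :
    (jouk q p).eval (Complex.exp (θ * Complex.I)) =
      Complex.exp (θ * Complex.I) ^ p * ((q.eval (Real.cos θ) : ℝ) : ℂ) := by
  have hz : Complex.exp (θ * Complex.I) ≠ 0 := Complex.exp_ne_zero _
  rw [jouk_eval hq hz]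
  congr 1
  have hmid : (Complex.exp (θ * Complex.I) + (Complex.exp (θ * Complex.I))⁻¹) / 2 =
      ((Real.cos θ : ℝ) : ℂ) := by
    rw [← Complex.exp_neg, ← neg_mul, Complex.ofReal_cos, Complex.cos]
  rw [hmid, aeval_real]

lemma jouk_circle_bound (hq : q.natDegree ≤ p)
    (hM : ∀ x ∈ Icc (-1 : ℝ) 1, |q.eval x| ≤ M) {z : ℂ} (hz : Complex.abs z = 1) :
    Complex.abs ((jouk q p).eval z) ≤ M := by
  obtain ⟨θ, rfl⟩ : ∃ θ : ℝ, z = Complex.exp (θ * Complex.I) := by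
    refine ⟨Complex.arg z, ?_⟩
    conv_lhs => rw [← Complex.abs_mul_exp_arg_mul_I z]
    rw [hz]; simp
  rw [jouk_circle_eq hq θ, map_mul, map_pow, Complex.abs_exp_ofReal_mul_I, one_pow, one_mul,
    Complex.abs_ofReal]
  exact hM _ ⟨Real.neg_one_le_cos θ, Real.cos_le_one θ⟩

lemma jouk_disc_bound (hq : q.natDegree ≤ p)
    (hM : ∀ x ∈ Icc (-1 : ℝ) 1, |q.eval x| ≤ M) {z : ℂ} (hz : Complex.abs z ≤ 1) :
    Complex.abs ((jouk q p).eval z) ≤ M := by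
  have hdc : DiffContOnCl ℂ (fun w => (jouk q p).eval w) (Metric.ball (0 : ℂ) 1) :=
    ((jouk q p).differentiable).diffContOnCl
  have hfr : ∀ w ∈ frontier (Metric.ball (0 : ℂ) 1),
      ‖(jouk q p).eval w‖ ≤ M := by
    intro w hw
    rw [frontier_ball (0 : ℂ) one_ne_zero, mem_sphere_zero_iff_norm] at hw
    exact jouk_circle_bound hq hM (by rw [← Complex.norm_eq_abs]; exact hw)
  have hcl : z ∈ closure (Metric.ball (0 : ℂ) 1) := by
    rw [closure_ball (0 : ℂ) one_ne_zero, Metric.mem_closedBall, dist_zero_right,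
      Complex.norm_eq_abs]
    exact hz
  simpa [Complex.norm_eq_abs] using
    Complex.norm_le_of_forall_mem_frontier_norm_le Metric.isBounded_ball hdc hfr hcl

lemma jouk_outer_bound (hq : q.natDegree ≤ p)
    (hM : ∀ x ∈ Icc (-1 : ℝ) 1, |q.eval x| ≤ M) {z : ℂ} (hz : 1 ≤ Complex.abs z) :
    Complex.abs ((jouk q p).eval z) ≤ M * Complex.abs z ^ (2 * p) := by
  have hz0 : z ≠ 0 := by
    intro h; rw [h] at hz; simp at hz; linarith
  rw [jouk_self_reciprocal hq hz0, map_mul, map_pow]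
  have hinv : Complex.abs z⁻¹ ≤ 1 := by
    rw [map_inv₀]
    exact inv_le_one_of_one_le₀ hz
  have := jouk_disc_bound hq hM hinv
  calc Complex.abs z ^ (2 * p) * Complex.abs ((jouk q p).eval z⁻¹)
      ≤ Complex.abs z ^ (2 * p) * M := by
        exact mul_le_mul_of_nonneg_left this (by positivity)
    _ = M * Complex.abs z ^ (2 * p) := by ring

lemma jouk_deriv_bound (hq : q.natDegree ≤ p) (hp : 1 ≤ p)
    (hM : ∀ x ∈ Icc (-1 : ℝ) 1, |q.eval x| ≤ M) {z : ℂ} (hz : Complex.abs z = 1) :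
    Complex.abs ((Polynomial.derivative (jouk q p)).eval z) ≤ Real.exp 2 * p * M := by
  have hM0 : 0 ≤ M := le_trans (abs_nonneg _) (hM 0 (by norm_num))
  have hp0 : (0 : ℝ) < p := by exact_mod_cast hp
  have hR : (0 : ℝ) < 1 / p := by positivity
  have hdc : DiffContOnCl ℂ (fun w => (jouk q p).eval w) (Metric.ball z (1 / p)) :=
    ((jouk q p).differentiable).diffContOnCl
  have hball : ∀ w ∈ Metric.sphere z (1 / p),
      ‖(jouk q p).eval w‖ ≤ M * Real.exp 2 := by
    intro w hw
    have habs : Complex.abs w ≤ 1 + 1 / p := by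
      have : dist w z = 1 / p := Metric.mem_sphere.mp hw
      calc Complex.abs w = ‖(w - z) + z‖ := by rw [sub_add_cancel, Complex.norm_eq_abs]
        _ ≤ ‖w - z‖ + ‖z‖ := norm_add_le _ _
        _ = 1 / p + 1 := by rw [← dist_eq_norm, this, Complex.norm_eq_abs, hz]
        _ = 1 + 1 / p := by ring
    rw [Complex.norm_eq_abs]
    rcases le_or_gt (Complex.abs w) 1 with h1 | h1
    · refine le_trans (jouk_disc_bound hq hM h1)
        (le_mul_of_one_le_right hM0 ?_)
      rw [← Real.exp_zero]
      exact Real.exp_le_exp.mpr (by norm_num)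
    · calc Complex.abs ((jouk q p).eval w) ≤ M * Complex.abs w ^ (2 * p) :=
          jouk_outer_bound hq hM h1.le
        _ ≤ M * Real.exp 2 := by
          refine mul_le_mul_of_nonneg_left ?_ hM0
          have e1 : (1 : ℝ) + 1 / p ≤ Real.exp (1 / p) := by
            have := Real.add_one_le_exp (1 / (p : ℝ))
            linarith
          calc Complex.abs w ^ (2 * p) ≤ (1 + 1 / p) ^ (2 * p) :=
              pow_le_pow_left₀ (by positivity) habs _
            _ ≤ Real.exp (1 / p) ^ (2 * p) :=
              pow_le_pow_left₀ (by positivity) e1 _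
            _ = Real.exp ((1 / p) * (2 * p)) := by
              rw [← Real.exp_nat_mul]
              congr 1
              push_cast
              ring
            _ = Real.exp 2 := by
              congr 1
              field_simp
  have key := Complex.norm_deriv_le_of_forall_mem_sphere_norm_le hR hdc hball
  have hder : deriv (fun w => (jouk q p).eval w) z =
      (Polynomial.derivative (jouk q p)).eval z := Polynomial.deriv _
  rw [hder] at key
  rw [← Complex.norm_eq_abs]
  calc ‖(Polynomial.derivative (jouk q p)).eval z‖ ≤ M * Real.exp 2 / (1 / p) := key
    _ = Real.exp 2 * p * M := by field_simp

lemma bernstein_trig (hq : q.natDegree ≤ p) (hp : 1 ≤ p)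
    (hM : ∀ x ∈ Icc (-1 : ℝ) 1, |q.eval x| ≤ M) (θ : ℝ) :
    |(Polynomial.derivative q).eval (Real.cos θ)| * |Real.sin θ| ≤
      (1 + Real.exp 2) * p * M := by
  set z := Complex.exp (θ * Complex.I) with hzdef
  have hzabs : Complex.abs z = 1 := Complex.abs_exp_ofReal_mul_I θ
  have hε : HasDerivAt (fun t : ℝ => Complex.exp (t * Complex.I)) (z * Complex.I) θ := by
    have h1 : HasDerivAt (fun t : ℂ => Complex.exp (t * Complex.I))
        (Complex.exp ((θ : ℂ) * Complex.I) * Complex.I) (θ : ℂ) := by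
      have h2 := (Complex.hasDerivAt_exp ((θ : ℂ) * Complex.I)).comp (θ : ℂ)
        ((hasDerivAt_id ((θ : ℂ))).mul_const Complex.I)
      simpa [Function.comp_def] using h2
    exact h1.comp_ofReal
  have hF1 : HasDerivAt (fun t : ℝ => (jouk q p).eval (Complex.exp (t * Complex.I)))
      ((z * Complex.I) • ((Polynomial.derivative (jouk q p)).eval z)) θ :=
    HasDerivAt.scomp (g₁ := fun w => (jouk q p).eval w) θ ((jouk q p).hasDerivAt z) hε
  have hqc : HasDerivAt (fun t : ℝ => q.eval (Real.cos t))
      ((Polynomial.derivative q).eval (Real.cos θ) * (-Real.sin θ)) θ :=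
    HasDerivAt.comp θ (q.hasDerivAt (Real.cos θ)) (Real.hasDerivAt_cos θ)
  have hB : HasDerivAt (fun t : ℝ => ((q.eval (Real.cos t) : ℝ) : ℂ))
      (((Polynomial.derivative q).eval (Real.cos θ) * (-Real.sin θ) : ℝ) : ℂ) θ :=
    hqc.ofReal_comp
  have hA : HasDerivAt (fun t : ℝ => Complex.exp (t * Complex.I) ^ p)
      ((p : ℂ) * z ^ (p - 1) * (z * Complex.I)) θ := by
    have h3 : HasDerivAt (fun t : ℝ => (fun w : ℂ => w ^ p) (Complex.exp (t * Complex.I)))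
        ((z * Complex.I) • ((p : ℂ) * z ^ (p - 1))) θ :=
      HasDerivAt.scomp (g₁ := fun w : ℂ => w ^ p) θ (hasDerivAt_pow p z) hε
    convert h3 using 1
    rw [smul_eq_mul]
    ring
  have hProd : HasDerivAt
      (fun t : ℝ => Complex.exp (t * Complex.I) ^ p * ((q.eval (Real.cos t) : ℝ) : ℂ))
      ((p : ℂ) * z ^ (p - 1) * (z * Complex.I) * ((q.eval (Real.cos θ) : ℝ) : ℂ) +
        z ^ p * (((Polynomial.derivative q).eval (Real.cos θ) * (-Real.sin θ) : ℝ) : ℂ)) θ :=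
    hA.mul hB
  have hfeq : (fun t : ℝ => (jouk q p).eval (Complex.exp (t * Complex.I))) =
      (fun t : ℝ => Complex.exp (t * Complex.I) ^ p * ((q.eval (Real.cos t) : ℝ) : ℂ)) :=
    funext fun t => jouk_circle_eq hq t
  have hF2 : HasDerivAt (fun t : ℝ => (jouk q p).eval (Complex.exp (t * Complex.I)))
      ((p : ℂ) * z ^ (p - 1) * (z * Complex.I) * ((q.eval (Real.cos θ) : ℝ) : ℂ) +
        z ^ p * (((Polynomial.derivative q).eval (Real.cos θ) * (-Real.sin θ) : ℝ) : ℂ)) θ := by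
    rw [hfeq]; exact hProd
  have hDeq := hF2.unique hF1
  -- isolate the term with q'
  have hiso : z ^ p * (((Polynomial.derivative q).eval (Real.cos θ) * Real.sin θ : ℝ) : ℂ) =
      (p : ℂ) * z ^ (p - 1) * (z * Complex.I) * ((q.eval (Real.cos θ) : ℝ) : ℂ) -
        (z * Complex.I) * ((Polynomial.derivative (jouk q p)).eval z) := by
    rw [smul_eq_mul] at hDeq
    push_cast at hDeq ⊢
    linear_combination -hDeq
  have habs := congrArg Complex.abs hiso
  rw [map_mul, map_pow, hzabs, one_pow, one_mul, Complex.abs_ofReal, abs_mul] at habs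
  rw [habs]
  have hpow : Complex.abs ((p : ℂ) * z ^ (p - 1) * (z * Complex.I) *
      ((q.eval (Real.cos θ) : ℝ) : ℂ)) ≤ p * M := by
    rw [map_mul, map_mul, map_mul, map_mul, map_pow, hzabs, one_pow, Complex.abs_I,
      Complex.abs_natCast, Complex.abs_ofReal]
    have := hM (Real.cos θ) ⟨Real.neg_one_le_cos θ, Real.cos_le_one θ⟩
    have hM0 : 0 ≤ M := le_trans (abs_nonneg _) this
    calc (p : ℝ) * 1 * (1 * 1) * |q.eval (Real.cos θ)| ≤ (p : ℝ) * 1 * (1 * 1) * M := by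
          have hp0 : (0:ℝ) ≤ (p:ℝ) := by positivity
          nlinarith
      _ = p * M := by ring
  have hd : Complex.abs ((z * Complex.I) * ((Polynomial.derivative (jouk q p)).eval z)) ≤
      Real.exp 2 * p * M := by
    rw [map_mul, map_mul, hzabs, Complex.abs_I, one_mul, one_mul]
    exact jouk_deriv_bound hq hp hM hzabs
  calc Complex.abs ((p : ℂ) * z ^ (p - 1) * (z * Complex.I) * ((q.eval (Real.cos θ) : ℝ) : ℂ) -
        (z * Complex.I) * ((Polynomial.derivative (jouk q p)).eval z)) ≤
      Complex.abs ((p : ℂ) * z ^ (p - 1) * (z * Complex.I) * ((q.eval (Real.cos θ) : ℝ) : ℂ)) +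
        Complex.abs ((z * Complex.I) * ((Polynomial.derivative (jouk q p)).eval z)) := by
        exact (AbsoluteValue.sub_le_add _ _ _)
    _ ≤ p * M + Real.exp 2 * p * M := add_le_add hpow hd
    _ = (1 + Real.exp 2) * p * M := by ring

/-- Bernstein inequality on `[-1,1]`. -/
lemma bernstein (hq : q.natDegree ≤ p) (hp : 1 ≤ p)
    (hM : ∀ x ∈ Icc (-1 : ℝ) 1, |q.eval x| ≤ M) {x : ℝ} (hx : x ∈ Icc (-1 : ℝ) 1) :
    |(Polynomial.derivative q).eval x| * Real.sqrt (1 - x ^ 2) ≤ (1 + Real.exp 2) * p * M := by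
  have h1 := bernstein_trig hq hp hM (Real.arccos x)
  rw [Real.cos_arccos hx.1 hx.2, Real.sin_arccos] at h1
  rwa [abs_of_nonneg (Real.sqrt_nonneg _)] at h1

lemma growth_pt (hq : q.natDegree ≤ p)
    (hM : ∀ x ∈ Icc (-1 : ℝ) 1, |q.eval x| ≤ M) {r : ℝ} (hr : 1 ≤ r) (σ : ℝ)
    (hσ : σ = 1 ∨ σ = -1) :
    |q.eval (σ * ((r + r⁻¹) / 2))| ≤ M * r ^ p := by
  have hr0 : (0 : ℝ) < r := lt_of_lt_of_le one_pos hr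
  have hσ0 : σ ≠ 0 := by rcases hσ with h | h <;> rw [h] <;> norm_num
  have hσinv : σ⁻¹ = σ := by rcases hσ with h | h <;> rw [h] <;> norm_num
  set z : ℂ := ((σ * r : ℝ) : ℂ) with hzdef
  have hz0 : z ≠ 0 := by
    simp only [hzdef, ne_eq, Complex.ofReal_eq_zero]
    exact mul_ne_zero hσ0 hr0.ne'
  have hzabs : Complex.abs z = r := by
    rw [hzdef, Complex.abs_ofReal, abs_mul]
    rcases hσ with h | h <;> rw [h] <;> simp [abs_of_pos hr0]
  have hmid : (z + z⁻¹) / 2 = ((σ * ((r + r⁻¹) / 2) : ℝ) : ℂ) := by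
    rw [hzdef, ← Complex.ofReal_inv]
    rw [show ((σ * r)⁻¹ : ℝ) = σ * r⁻¹ by rw [mul_inv, hσinv]]
    push_cast
    ring
  have hA := jouk_eval hq hz0
  rw [hmid, aeval_real] at hA
  have houter := jouk_outer_bound hq hM (z := z) (by rw [hzabs]; exact hr)
  rw [hA, map_mul, map_pow, hzabs, Complex.abs_ofReal] at houter
  have hrp : (0 : ℝ) < r ^ p := by positivity
  rw [show (2 : ℕ) * p = p + p by ring, pow_add] at houter
  calc |q.eval (σ * ((r + r⁻¹) / 2))| =
      (r ^ p * |q.eval (σ * ((r + r⁻¹) / 2))|) / r ^ p := by field_simp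
    _ ≤ (M * (r ^ p * r ^ p)) / r ^ p := by
        exact div_le_div_of_nonneg_right houter hrp.le
    _ = M * r ^ p := by field_simp

lemma growth (hq : q.natDegree ≤ p) {a M' r₁ : ℝ} (ha : 0 < a) (ha1 : a ≤ 1)
    (hM' : ∀ x ∈ Icc (-a) a, |q.eval x| ≤ M') (hr₁ : 1 ≤ r₁)
    (hk : 1 / a + Real.sqrt ((1 / a) ^ 2 - 1) ≤ r₁) :
    ∀ y ∈ Icc (-1 : ℝ) 1, |q.eval y| ≤ M' * r₁ ^ p := by
  have hM'0 : 0 ≤ M' := le_trans (abs_nonneg _) (hM' 0 ⟨by linarith, by linarith⟩)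
  have hr₁p : (1 : ℝ) ≤ r₁ ^ p := one_le_pow₀ hr₁
  intro y hy
  rcases le_or_gt |y| a with hya | hya
  · have := hM' y ⟨neg_le_of_abs_le hya, le_of_abs_le hya⟩
    calc |q.eval y| ≤ M' := this
      _ = M' * 1 := by ring
      _ ≤ M' * r₁ ^ p := by nlinarith
  · -- scaled polynomial
    set qa : Polynomial ℝ := q.comp (Polynomial.C a * Polynomial.X) with hqadef
    have hqaeval : ∀ x : ℝ, qa.eval x = q.eval (a * x) := by
      intro x; simp [hqadef]
    have hqadeg : qa.natDegree ≤ p := by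
      refine le_trans Polynomial.natDegree_comp_le ?_
      have h1 : (Polynomial.C a * Polynomial.X : Polynomial ℝ).natDegree ≤ 1 := by
        refine le_trans (Polynomial.natDegree_mul_le) ?_
        simp
      calc q.natDegree * (Polynomial.C a * Polynomial.X : Polynomial ℝ).natDegree ≤
          q.natDegree * 1 := Nat.mul_le_mul_left _ h1
        _ = q.natDegree := by ring
        _ ≤ p := hq
    have hMa : ∀ x ∈ Icc (-1 : ℝ) 1, |qa.eval x| ≤ M' := by
      intro x hx
      rw [hqaeval]
      refine hM' (a * x) ⟨?_, ?_⟩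
      · nlinarith [hx.1, hx.2]
      · nlinarith [hx.1, hx.2]
    set v : ℝ := |y| / a with hvdef
    have hv1 : 1 < v := (one_lt_div ha).mpr hya
    have hvsq : (0 : ℝ) ≤ v ^ 2 - 1 := by nlinarith
    set r : ℝ := v + Real.sqrt (v ^ 2 - 1) with hrdef
    have hrv : 1 ≤ r := by
      have := Real.sqrt_nonneg (v ^ 2 - 1)
      simp only [hrdef]; linarith
    have hrinv : r⁻¹ = v - Real.sqrt (v ^ 2 - 1) := by
      have hmul : r * (v - Real.sqrt (v ^ 2 - 1)) = 1 := by
        rw [hrdef]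
        have := Real.sq_sqrt hvsq
        nlinarith [this]
      field_simp
      linarith [hmul]
    have hmid : (r + r⁻¹) / 2 = v := by
      rw [hrinv, hrdef]; ring
    have hrle : r ≤ r₁ := by
      have hva : v ≤ 1 / a := by
        rw [hvdef, div_le_div_iff₀ ha ha]
        nlinarith [hy.1, hy.2, abs_le.mpr ⟨hy.1, hy.2⟩]
      have hsq : Real.sqrt (v ^ 2 - 1) ≤ Real.sqrt ((1 / a) ^ 2 - 1) := by
        apply Real.sqrt_le_sqrt
        nlinarith
      rw [hrdef]; linarith
    -- y = σ * (a * v) with σ = ±1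
    have hyabs : a * v = |y| := by rw [hvdef]; field_simp
    rcases le_or_gt 0 y with hy0 | hy0
    · have : y = a * v := by rw [hyabs, abs_of_nonneg hy0]
      have h2 := growth_pt hqadeg hMa hrv 1 (Or.inl rfl)
      rw [hqaeval, hmid] at h2
      rw [this]
      calc |q.eval (a * v)| = |q.eval (a * (1 * v))| := by rw [one_mul]
        _ ≤ M' * r ^ p := h2
        _ ≤ M' * r₁ ^ p := by
            have := pow_le_pow_left₀ (by linarith : (0:ℝ) ≤ r) hrle p
            nlinarith
    · have : y = a * (-v) := by
        have := abs_of_neg hy0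
        rw [show a * (-v) = -(a * v) by ring, hyabs]
        linarith
      have h2 := growth_pt hqadeg hMa hrv (-1) (Or.inr rfl)
      rw [hqaeval, hmid] at h2
      rw [this]
      calc |q.eval (a * (-v))| = |q.eval (a * (-1 * v))| := by rw [neg_one_mul]
        _ ≤ M' * r ^ p := h2
        _ ≤ M' * r₁ ^ p := by
            have := pow_le_pow_left₀ (by linarith : (0:ℝ) ≤ r) hrle p
            nlinarith

lemma cont_weight (q : Polynomial ℝ) {γ : ℝ} (hγ : 0 ≤ γ) :
    Continuous fun x : ℝ => (1 - x) ^ γ * q.eval x ^ 2 := by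
  have h1 : ∀ x : ℝ, ContinuousAt (fun t : ℝ => t ^ γ) x := fun x =>
    Real.continuousAt_rpow_const x γ (Or.inr hγ)
  exact ((continuous_iff_continuousAt.mpr h1).comp
    (continuous_const.sub continuous_id)).mul ((q.continuous).pow 2)

set_option maxHeartbeats 2000000 in
/-- Nikolskii-type bound. -/
lemma nikolskii {β : ℝ} (hβ : 0 ≤ β) (hq : q.natDegree ≤ p) (hp : 1 ≤ p) :
    ∃ N : ℝ, 0 ≤ N ∧ (∀ x ∈ Icc (-1 : ℝ) 1, q.eval x ^ 2 ≤ N) ∧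
      N ≤ 128 * Real.exp 3 * (1 + Real.exp 2) * (16 : ℝ) ^ β * (p : ℝ) ^ (2 * β + 2) *
        ∫ x in Icc (-1 : ℝ) 1, (1 - x) ^ β * q.eval x ^ 2 := by
  classical
  have hp0 : (0 : ℝ) < p := by exact_mod_cast hp
  have hp1 : (1 : ℝ) ≤ p := by exact_mod_cast hp
  set e : ℝ := Real.exp 1 with hedef
  have he1 : 1 ≤ e := by
    rw [hedef]
    have := Real.add_one_le_exp (1 : ℝ)
    linarith
  have he0 : 0 < e := lt_of_lt_of_le one_pos he1
  set C₁ : ℝ := 1 + Real.exp 2 with hC₁def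
  have hC₁1 : 1 ≤ C₁ := by
    rw [hC₁def]
    have := Real.exp_pos (2 : ℝ)
    linarith
  have hC₁0 : 0 < C₁ := lt_of_lt_of_le one_pos hC₁1
  set T : ℝ := 16 * (p : ℝ) ^ 2 with hTdef
  have hT16 : 16 ≤ T := by rw [hTdef]; nlinarith
  have hT0 : 0 < T := by linarith
  set ρ : ℝ := T⁻¹ with hρdef
  have hρ0 : 0 < ρ := by positivity
  have hρ16 : ρ ≤ 1 / 16 := by
    rw [hρdef]
    rw [inv_le_comm₀ hT0 (by norm_num)]
    linarith
  have hsqrtρ : Real.sqrt ρ = 1 / (4 * p) := by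
    have : ρ = (1 / (4 * p)) ^ 2 := by
      rw [hρdef, hTdef]; field_simp; ring
    rw [this, Real.sqrt_sq (by positivity)]
  set a : ℝ := 1 - 2 * ρ with hadef
  have ha0 : 0 < a := by rw [hadef]; linarith
  have ha1 : a ≤ 1 := by rw [hadef]; linarith
  -- global max
  obtain ⟨xM, hxM, hmax⟩ := isCompact_Icc.exists_isMaxOn (α := ℝ) (β := ℝ)
    (s := Icc (-1 : ℝ) 1) ⟨0, by norm_num⟩
    ((continuous_abs.comp q.continuous).continuousOn)
  set M : ℝ := |q.eval xM| with hMdef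
  have hM0 : 0 ≤ M := abs_nonneg _
  have hM : ∀ x ∈ Icc (-1 : ℝ) 1, |q.eval x| ≤ M := fun x hx => hmax hx
  -- max on the shrunk interval
  obtain ⟨xs, hxs, hmaxs⟩ := isCompact_Icc.exists_isMaxOn (α := ℝ) (β := ℝ)
    (s := Icc (-a) a) ⟨0, by constructor <;> linarith⟩
    ((continuous_abs.comp q.continuous).continuousOn)
  set M' : ℝ := |q.eval xs| with hM'def
  have hM'0 : 0 ≤ M' := abs_nonneg _
  have hM' : ∀ x ∈ Icc (-a) a, |q.eval x| ≤ M' := fun x hx => hmaxs hx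
  -- growth: M ≤ e * M'
  have hsqrtρ4 : Real.sqrt ρ ≤ 1 / 4 := by
    rw [hsqrtρ]
    rw [div_le_div_iff₀ (by positivity) (by norm_num)]
    linarith
  have hgrow : M ≤ M' * (1 + 1 / p) ^ p := by
    have hk : 1 / a + Real.sqrt ((1 / a) ^ 2 - 1) ≤ 1 + 1 / p := by
      have h1a : 1 / a ≤ 1 + 4 * ρ := by
        rw [div_le_iff₀ ha0, hadef]
        nlinarith
      have h1a' : 1 ≤ 1 / a := by
        rw [le_div_iff₀ ha0]; linarith
      have hsq : Real.sqrt ((1 / a) ^ 2 - 1) ≤ 3 * Real.sqrt ρ := by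
        have h9 : (3 : ℝ) * Real.sqrt ρ = Real.sqrt (9 * ρ) := by
          rw [show (9 : ℝ) * ρ = 3 ^ 2 * ρ by norm_num, Real.sqrt_mul (by positivity),
            Real.sqrt_sq (by norm_num)]
        rw [h9]
        apply Real.sqrt_le_sqrt
        nlinarith
      have h4ρ : 4 * ρ ≤ Real.sqrt ρ := by
        nlinarith [Real.sq_sqrt hρ0.le, Real.sqrt_nonneg ρ]
      have : 4 * Real.sqrt ρ = 1 / p := by rw [hsqrtρ]; field_simp
      linarith
    have h1p : (1 : ℝ) ≤ 1 + 1 / p := by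
      have : (0:ℝ) < 1 / p := by positivity
      linarith
    exact growth hq ha0 ha1 hM' h1p hk xM hxM
  have hr₁e : ((1 : ℝ) + 1 / p) ^ p ≤ e := by
    have e1 : (1 : ℝ) + 1 / p ≤ Real.exp (1 / p) := by
      have := Real.add_one_le_exp (1 / (p : ℝ))
      linarith
    calc ((1 : ℝ) + 1 / p) ^ p ≤ Real.exp (1 / p) ^ p :=
        pow_le_pow_left₀ (by positivity) e1 p
      _ = Real.exp ((1 / p) * p) := by
          rw [← Real.exp_nat_mul]
          congr 1
          push_cast
          ring
      _ = e := by rw [hedef]; congr 1; field_simp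
  have hMeM' : M ≤ e * M' := by
    calc M ≤ M' * (1 + 1 / p) ^ p := hgrow
      _ ≤ M' * e := mul_le_mul_of_nonneg_left hr₁e hM'0
      _ = e * M' := by ring
  -- flat interval J = [xs, xs + ℓ]
  set ℓ : ℝ := ρ / (2 * e * C₁) with hℓdef
  have hℓ0 : 0 < ℓ := by rw [hℓdef]; positivity
  have hℓρ : ℓ ≤ ρ := by
    rw [hℓdef]
    rw [div_le_iff₀ (by positivity)]
    nlinarith [hρ0, he1, hC₁1, mul_le_mul_of_nonneg_left (one_le_two.trans (by nlinarith : (2:ℝ) ≤ 2 * e * C₁)) hρ0.le]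
  set J : Set ℝ := Icc xs (xs + ℓ) with hJdef
  have hJx : ∀ x ∈ J, -(1 - ρ) ≤ x ∧ x ≤ 1 - ρ := by
    intro x hx
    have h1 : -a ≤ xs := hxs.1
    have h2 : xs ≤ a := hxs.2
    constructor
    · have := hx.1; rw [hadef] at h1; linarith
    · have := hx.2; rw [hadef] at h2; linarith
  have hJsub : J ⊆ Icc (-1 : ℝ) 1 := by
    intro x hx
    obtain ⟨h1, h2⟩ := hJx x hx
    exact ⟨by linarith, by linarith⟩
  -- derivative bound on J
  have hderiv : ∀ x ∈ J, |(Polynomial.derivative q).eval x| ≤ 4 * C₁ * p ^ 2 * M := by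
    intro x hx
    obtain ⟨h1, h2⟩ := hJx x hx
    have hx2 : 1 - x ^ 2 ≥ ρ := by nlinarith [hρ0, hρ16]
    have hsq : Real.sqrt (1 - x ^ 2) ≥ 1 / (4 * p) := by
      rw [← hsqrtρ]
      exact Real.sqrt_le_sqrt hx2
    have hb := bernstein hq hp hM (hJsub hx)
    rw [← hC₁def] at hb
    have h4p : |(Polynomial.derivative q).eval x| * (1 / (4 * p)) ≤ C₁ * p * M := by
      calc |(Polynomial.derivative q).eval x| * (1 / (4 * p)) ≤
          |(Polynomial.derivative q).eval x| * Real.sqrt (1 - x ^ 2) :=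
            mul_le_mul_of_nonneg_left hsq (abs_nonneg _)
        _ ≤ C₁ * p * M := hb
    have h2 := mul_le_mul_of_nonneg_left h4p (by positivity : (0:ℝ) ≤ 4 * p)
    have h3 : 4 * (p:ℝ) * (|(Polynomial.derivative q).eval x| * (1 / (4 * p))) =
        |(Polynomial.derivative q).eval x| := by
      field_simp
    rw [h3] at h2
    calc |(Polynomial.derivative q).eval x| ≤ 4 * p * (C₁ * p * M) := h2
      _ = 4 * C₁ * p ^ 2 * M := by ring
  -- MVT: q is large on J
  have hflat : ∀ x ∈ J, M / (2 * e) ≤ |q.eval x| := by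
    intro x hx
    have hmvt := Convex.norm_image_sub_le_of_norm_deriv_le
      (f := fun t => q.eval t) (s := J) (C := 4 * C₁ * p ^ 2 * M)
      (fun t _ => (q.hasDerivAt t).differentiableAt)
      (fun t ht => by
        rw [Polynomial.deriv]
        exact (Real.norm_eq_abs _).le.trans_eq' rfl |>.trans (hderiv t ht))
      (convex_Icc _ _) (left_mem_Icc.mpr (by linarith)) hx
    have hdist : ‖x - xs‖ ≤ ℓ := by
      rw [Real.norm_eq_abs, abs_of_nonneg (by linarith [hx.1])]
      linarith [hx.2]
    have hstep : |q.eval x - q.eval xs| ≤ 4 * C₁ * p ^ 2 * M * ℓ := by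
      calc |q.eval x - q.eval xs| = ‖q.eval x - q.eval xs‖ := (Real.norm_eq_abs _).symm
        _ ≤ 4 * C₁ * p ^ 2 * M * ‖x - xs‖ := hmvt
        _ ≤ 4 * C₁ * p ^ 2 * M * ℓ := by
            apply mul_le_mul_of_nonneg_left hdist (by positivity)
    have hsmall : 4 * C₁ * p ^ 2 * M * ℓ ≤ M / (2 * e) := by
      have heq : 4 * C₁ * (p:ℝ) ^ 2 * M * ℓ = M / (8 * e) := by
        rw [hℓdef, hρdef, hTdef]
        field_simp
        ring
      rw [heq, div_le_div_iff₀ (by positivity) (by positivity)]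
      nlinarith [hM0, he0]
    have hM'x : M / e ≤ M' := by
      rw [div_le_iff₀ he0]
      calc M ≤ e * M' := hMeM'
        _ = M' * e := by ring
    calc M / (2 * e) = M / e - M / (2 * e) := by field_simp; ring
      _ ≤ M' - |q.eval x - q.eval xs| := by
          have := hstep.trans hsmall
          have h2e : M / (2*e) ≤ M / e := by
            apply div_le_div_of_nonneg_left hM0 he0
            linarith
          -- |q x - q xs| ≤ M/(2e), M/e ≤ M'
          have habs2 : |q.eval x - q.eval xs| ≤ M / (2 * e) := hstep.trans hsmall
          linarith
      _ ≤ |q.eval xs| - |q.eval x - q.eval xs| := by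
          rw [← hM'def]
      _ ≤ |q.eval x| := by
          have := abs_sub_abs_le_abs_sub (q.eval xs) (q.eval x)
          have h3 : |q.eval xs - q.eval x| = |q.eval x - q.eval xs| := abs_sub_comm _ _
          linarith
  -- integral lower bound over J
  have hInt : IntegrableOn (fun x => (1 - x) ^ β * q.eval x ^ 2) (Icc (-1 : ℝ) 1) volume :=
    (cont_weight q hβ).integrableOn_Icc
  have h0ae : 0 ≤ᵐ[volume.restrict (Icc (-1 : ℝ) 1)]
      (fun x => (1 - x) ^ β * q.eval x ^ 2) := by
    refine (ae_restrict_iff' measurableSet_Icc).mpr (Filter.Eventually.of_forall ?_)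
    intro x hx
    have h1x : (0:ℝ) ≤ 1 - x := by linarith [hx.2]
    positivity
  have hJint : IntegrableOn (fun x => (1 - x) ^ β * q.eval x ^ 2) J volume :=
    hInt.mono_set hJsub
  have hptJ : ∀ x ∈ J, ρ ^ β * (M / (2 * e)) ^ 2 ≤ (1 - x) ^ β * q.eval x ^ 2 := by
    intro x hx
    obtain ⟨h1, h2⟩ := hJx x hx
    have hrw : ρ ^ β ≤ (1 - x) ^ β := Real.rpow_le_rpow hρ0.le (by linarith) hβ
    have hq2 : (M / (2 * e)) ^ 2 ≤ q.eval x ^ 2 := by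
      have := pow_le_pow_left₀ (by positivity) (hflat x hx) 2
      rwa [sq_abs] at this
    have hx0 : (0:ℝ) ≤ (1 - x) ^ β := Real.rpow_nonneg (by linarith) _
    have := mul_le_mul hrw hq2 (by positivity) hx0
    exact this
  have hconst : ∫ _x in J, (ρ ^ β * (M / (2 * e)) ^ 2) ∂(volume) =
      ℓ * (ρ ^ β * (M / (2 * e)) ^ 2) := by
    rw [setIntegral_const, hJdef, Real.volume_real_Icc, show xs + ℓ - xs = ℓ by ring,
      max_eq_left hℓ0.le, smul_eq_mul]
  have hmono1 : ∫ _x in J, (ρ ^ β * (M / (2 * e)) ^ 2) ∂(volume) ≤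
      ∫ x in J, (1 - x) ^ β * q.eval x ^ 2 ∂(volume) := by
    refine setIntegral_mono_on (integrableOn_const (lt_top_iff_ne_top.mp ?_)) hJint
      measurableSet_Icc hptJ
    rw [hJdef, Real.volume_Icc]
    exact ENNReal.ofReal_lt_top
  have hmono2 : ∫ x in J, (1 - x) ^ β * q.eval x ^ 2 ∂(volume) ≤
      ∫ x in Icc (-1 : ℝ) 1, (1 - x) ^ β * q.eval x ^ 2 ∂(volume) :=
    setIntegral_mono_set hInt h0ae (HasSubset.Subset.eventuallyLE hJsub)
  set A : ℝ := ∫ x in Icc (-1 : ℝ) 1, (1 - x) ^ β * q.eval x ^ 2 ∂(volume) with hAdef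
  have hlow : ℓ * (ρ ^ β * (M / (2 * e)) ^ 2) ≤ A := by
    rw [← hconst]
    exact hmono1.trans hmono2
  -- final algebra
  have hB16 : (0:ℝ) < (16:ℝ) ^ β := Real.rpow_pos_of_pos (by norm_num) β
  have hPb : (0:ℝ) < (p:ℝ) ^ (2*β) := Real.rpow_pos_of_pos hp0 _
  have hTβ : T ^ β = (16:ℝ) ^ β * (p:ℝ) ^ (2*β) := by
    rw [hTdef, ← Real.rpow_natCast (p:ℝ) 2,
      Real.mul_rpow (by norm_num) (Real.rpow_nonneg hp0.le _), ← Real.rpow_mul hp0.le]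
    norm_num
  have hrpow1 : ρ ^ β = ((16:ℝ) ^ β * (p:ℝ) ^ (2*β))⁻¹ := by
    rw [hρdef, Real.inv_rpow hT0.le, hTβ]
  have hrpow2 : (p:ℝ) ^ (2*β+2) = (p:ℝ) ^ (2*β) * (p:ℝ) ^ (2:ℕ) := by
    rw [Real.rpow_add hp0, ← Real.rpow_natCast (p:ℝ) 2]
    norm_num
  set K : ℝ := 128 * Real.exp 3 * (1 + Real.exp 2) * (16:ℝ) ^ β * (p:ℝ) ^ (2*β+2) with hKdef
  have hexp3 : Real.exp 3 = Real.exp 1 * Real.exp 2 := by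
    rw [← Real.exp_add]; norm_num
  have hKℓ : K * (ℓ * ρ ^ β) = 4 * Real.exp 2 := by
    rw [hKdef, hrpow1, hrpow2, hℓdef, hρdef, hTdef, hexp3, hC₁def, hedef]
    have hep : Real.exp 1 ≠ 0 := (Real.exp_pos 1).ne'
    have he2 : (0:ℝ) < 1 + Real.exp 2 := by positivity
    field_simp
    ring
  have hK0 : 0 ≤ K := by
    rw [hKdef]
    have := Real.rpow_nonneg (by norm_num : (0:ℝ) ≤ 16) β
    have := Real.rpow_nonneg hp0.le (2*β+2)
    positivity
  refine ⟨M ^ 2, by positivity, ?_, ?_⟩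
  · intro x hx
    have := pow_le_pow_left₀ (abs_nonneg _) (hM x hx) 2
    rwa [sq_abs] at this
  · have hMsq : M ^ 2 = (4 * Real.exp 2) * (M / (2 * e)) ^ 2 := by
      rw [div_pow, mul_pow, hedef, show Real.exp 1 ^ 2 = Real.exp 2 by
        rw [← Real.exp_nat_mul]; norm_num]
      field_simp
      ring
    calc M ^ 2 = (K * (ℓ * ρ ^ β)) * (M / (2 * e)) ^ 2 := by rw [hKℓ, hMsq]
      _ = K * (ℓ * (ρ ^ β * (M / (2 * e)) ^ 2)) := by ring
      _ ≤ K * A := mul_le_mul_of_nonneg_left hlow hK0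
      _ = 128 * Real.exp 3 * (1 + Real.exp 2) * (16:ℝ) ^ β * (p:ℝ) ^ (2*β+2) * A := by
          rw [hKdef]


set_option maxHeartbeats 1000000 in
/-- The one-sided inverse estimate for the weight `(1-x)`. -/
lemma one_sided {α β : ℝ} (hα : 0 ≤ α) (hαβ : α ≤ β) {p : ℕ} (hp : 1 ≤ p)
    {q : Polynomial ℝ} (hq : q.natDegree ≤ p) :
    ∫ x in Icc (-1 : ℝ) 1, (1 - x) ^ α * q.eval x ^ 2 ≤
      (1 + 128 * Real.exp 3 * (1 + Real.exp 2) * (16 : ℝ) ^ β) * (p : ℝ) ^ (2 * (β - α)) *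
        ∫ x in Icc (-1 : ℝ) 1, (1 - x) ^ β * q.eval x ^ 2 := by
  have hβ : 0 ≤ β := hα.trans hαβ
  have hp0 : (0 : ℝ) < p := by exact_mod_cast hp
  have hp1 : (1 : ℝ) ≤ p := by exact_mod_cast hp
  set δ : ℝ := ((p : ℝ) ^ (2:ℕ))⁻¹ with hδdef
  have hδ0 : 0 < δ := by rw [hδdef]; positivity
  have hδ1 : δ ≤ 1 := by
    rw [hδdef, inv_le_one_iff₀]
    right; nlinarith
  set w : ℝ := (p : ℝ) ^ (2 * (β - α)) with hwdef
  have hw0 : 0 < w := Real.rpow_pos_of_pos hp0 _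
  set A : ℝ := ∫ x in Icc (-1 : ℝ) 1, (1 - x) ^ β * q.eval x ^ 2 with hAdef
  have hIntα : IntegrableOn (fun x => (1 - x) ^ α * q.eval x ^ 2) (Icc (-1 : ℝ) 1) volume :=
    (cont_weight q hα).integrableOn_Icc
  have hIntβ : IntegrableOn (fun x => (1 - x) ^ β * q.eval x ^ 2) (Icc (-1 : ℝ) 1) volume :=
    (cont_weight q hβ).integrableOn_Icc
  have h0aeβ : 0 ≤ᵐ[volume.restrict (Icc (-1 : ℝ) 1)]
      (fun x => (1 - x) ^ β * q.eval x ^ 2) := by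
    refine (ae_restrict_iff' measurableSet_Icc).mpr (Filter.Eventually.of_forall ?_)
    intro x hx
    have h1x : (0:ℝ) ≤ 1 - x := by linarith [hx.2]
    positivity
  -- split the α-integral
  have hsplit : ∫ x in Icc (-1 : ℝ) 1, (1 - x) ^ α * q.eval x ^ 2 =
      (∫ x in Ioc (-1 : ℝ) (1 - δ), (1 - x) ^ α * q.eval x ^ 2) +
        ∫ x in Ioc (1 - δ) (1 : ℝ), (1 - x) ^ α * q.eval x ^ 2 := by
    rw [integral_Icc_eq_integral_Ioc,
      ← intervalIntegral.integral_of_le (by linarith : (-1:ℝ) ≤ 1),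
      ← intervalIntegral.integral_of_le (by linarith : (-1:ℝ) ≤ 1 - δ),
      ← intervalIntegral.integral_of_le (by linarith : (1:ℝ) - δ ≤ 1)]
    exact (intervalIntegral.integral_add_adjacent_intervals
      ((cont_weight q hα).intervalIntegrable _ _)
      ((cont_weight q hα).intervalIntegrable _ _)).symm
  -- piece 1
  have hpiece1 : (∫ x in Ioc (-1 : ℝ) (1 - δ), (1 - x) ^ α * q.eval x ^ 2) ≤ w * A := by
    have hpt : ∀ x ∈ Ioc (-1 : ℝ) (1 - δ),
        (1 - x) ^ α * q.eval x ^ 2 ≤ w * ((1 - x) ^ β * q.eval x ^ 2) := by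
      intro x hx
      have hδx : δ ≤ 1 - x := by linarith [hx.2]
      have h1x : 0 < 1 - x := lt_of_lt_of_le hδ0 hδx
      have hba : (1 - x) ^ β = (1 - x) ^ α * (1 - x) ^ (β - α) := by
        rw [← Real.rpow_add h1x]; ring_nf
      have hδw : w * δ ^ (β - α) = 1 := by
        have hδr : δ = (p : ℝ) ^ (-(2:ℝ)) := by
          rw [hδdef, Real.rpow_neg hp0.le]
          congr 1
          rw [← Real.rpow_natCast (p:ℝ) 2]
          norm_num
        rw [hwdef, hδr, ← Real.rpow_mul hp0.le, ← Real.rpow_add hp0]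
        rw [show 2 * (β - α) + -2 * (β - α) = 0 by ring, Real.rpow_zero]
      have hmono : δ ^ (β - α) ≤ (1 - x) ^ (β - α) :=
        Real.rpow_le_rpow hδ0.le hδx (by linarith)
      have h1 : (1 - x) ^ α * q.eval x ^ 2 =
          w * ((1 - x) ^ α * δ ^ (β - α) * q.eval x ^ 2) := by
        rw [show w * ((1 - x) ^ α * δ ^ (β - α) * q.eval x ^ 2) =
          (w * δ ^ (β - α)) * ((1 - x) ^ α * q.eval x ^ 2) by ring, hδw, one_mul]
      rw [h1, hba]
      apply mul_le_mul_of_nonneg_left _ hw0.le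
      have h2 : (1 - x) ^ α * δ ^ (β - α) ≤ (1 - x) ^ α * (1 - x) ^ (β - α) :=
        mul_le_mul_of_nonneg_left hmono (Real.rpow_nonneg h1x.le _)
      apply mul_le_mul_of_nonneg_right _ (sq_nonneg _)
      calc (1 - x) ^ α * δ ^ (β - α) ≤ (1 - x) ^ α * (1 - x) ^ (β - α) := h2
        _ = (1 - x) ^ α * (1 - x) ^ (β - α) := rfl
    have hm1 : (∫ x in Ioc (-1 : ℝ) (1 - δ), (1 - x) ^ α * q.eval x ^ 2) ≤
        ∫ x in Ioc (-1 : ℝ) (1 - δ), w * ((1 - x) ^ β * q.eval x ^ 2) := by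
      refine setIntegral_mono_on (hIntα.mono_set ?_) ((hIntβ.mono_set ?_).const_mul w)
        measurableSet_Ioc hpt
      · exact Ioc_subset_Icc_self.trans (Icc_subset_Icc le_rfl (by linarith))
      · exact Ioc_subset_Icc_self.trans (Icc_subset_Icc le_rfl (by linarith))
    have hm2 : (∫ x in Ioc (-1 : ℝ) (1 - δ), (1 - x) ^ β * q.eval x ^ 2) ≤ A := by
      rw [hAdef]
      exact setIntegral_mono_set hIntβ h0aeβ
        (HasSubset.Subset.eventuallyLE
          (Ioc_subset_Icc_self.trans (Icc_subset_Icc le_rfl (by linarith))))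
    calc (∫ x in Ioc (-1 : ℝ) (1 - δ), (1 - x) ^ α * q.eval x ^ 2) ≤
        ∫ x in Ioc (-1 : ℝ) (1 - δ), w * ((1 - x) ^ β * q.eval x ^ 2) := hm1
      _ = w * ∫ x in Ioc (-1 : ℝ) (1 - δ), (1 - x) ^ β * q.eval x ^ 2 := by
          rw [integral_const_mul]
      _ ≤ w * A := mul_le_mul_of_nonneg_left hm2 hw0.le
  -- piece 2
  obtain ⟨N, hN0, hNpt, hNle⟩ := nikolskii hβ hq hp
  have hpiece2 : (∫ x in Ioc (1 - δ) (1 : ℝ), (1 - x) ^ α * q.eval x ^ 2) ≤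
      128 * Real.exp 3 * (1 + Real.exp 2) * (16 : ℝ) ^ β * w * A := by
    have hpt : ∀ x ∈ Ioc (1 - δ) (1 : ℝ), (1 - x) ^ α * q.eval x ^ 2 ≤ δ ^ α * N := by
      intro x hx
      have h1 : (0:ℝ) ≤ 1 - x := by linarith [hx.2]
      have h2 : 1 - x ≤ δ := by linarith [hx.1]
      have h3 : (1 - x) ^ α ≤ δ ^ α := Real.rpow_le_rpow h1 h2 hα
      have h4 : q.eval x ^ 2 ≤ N := hNpt x ⟨by linarith [hδ1, hx.1], hx.2⟩
      exact mul_le_mul h3 h4 (sq_nonneg _) (Real.rpow_nonneg hδ0.le _)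
    have hm1 : (∫ x in Ioc (1 - δ) (1 : ℝ), (1 - x) ^ α * q.eval x ^ 2) ≤
        ∫ _x in Ioc (1 - δ) (1 : ℝ), (δ ^ α * N) ∂(volume) := by
      refine setIntegral_mono_on (hIntα.mono_set ?_) (integrableOn_const (lt_top_iff_ne_top.mp ?_))
        measurableSet_Ioc hpt
      · exact Ioc_subset_Icc_self.trans (Icc_subset_Icc (by linarith) le_rfl)
      · rw [Real.volume_Ioc]; exact ENNReal.ofReal_lt_top
    have hm2 : (∫ _x in Ioc (1 - δ) (1 : ℝ), (δ ^ α * N) ∂(volume)) = δ ^ α * N * δ := by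
      rw [setIntegral_const, Real.volume_real_Ioc, show (1:ℝ) - (1 - δ) = δ by ring,
        max_eq_left hδ0.le, smul_eq_mul]
      ring
    have hkey : δ ^ α * N * δ ≤ 128 * Real.exp 3 * (1 + Real.exp 2) * (16 : ℝ) ^ β * w * A := by
      have hδa1 : δ ^ α * δ = δ ^ (α + 1) := by
        rw [Real.rpow_add hδ0, Real.rpow_one]
      have hδw2 : δ ^ (α + 1) * (p : ℝ) ^ (2 * β + 2) = w := by
        have hδr : δ = (p : ℝ) ^ (-(2:ℝ)) := by
          rw [hδdef, Real.rpow_neg hp0.le]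
          congr 1
          rw [← Real.rpow_natCast (p:ℝ) 2]
          norm_num
        rw [hwdef, hδr, ← Real.rpow_mul hp0.le, ← Real.rpow_add hp0]
        congr 1
        ring
      have hNA := hNle
      have hδα1 : (0:ℝ) ≤ δ ^ (α + 1) := Real.rpow_nonneg hδ0.le _
      calc δ ^ α * N * δ = δ ^ (α + 1) * N := by rw [← hδa1]; ring
        _ ≤ δ ^ (α + 1) * (128 * Real.exp 3 * (1 + Real.exp 2) * (16 : ℝ) ^ β *
              (p : ℝ) ^ (2 * β + 2) * A) := mul_le_mul_of_nonneg_left hNA hδα1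
        _ = 128 * Real.exp 3 * (1 + Real.exp 2) * (16 : ℝ) ^ β *
              (δ ^ (α + 1) * (p : ℝ) ^ (2 * β + 2)) * A := by ring
        _ = 128 * Real.exp 3 * (1 + Real.exp 2) * (16 : ℝ) ^ β * w * A := by rw [hδw2]
    calc (∫ x in Ioc (1 - δ) (1 : ℝ), (1 - x) ^ α * q.eval x ^ 2) ≤
        ∫ _x in Ioc (1 - δ) (1 : ℝ), (δ ^ α * N) ∂(volume) := hm1
      _ = δ ^ α * N * δ := hm2
      _ ≤ _ := hkey
  rw [hsplit]
  calc (∫ x in Ioc (-1 : ℝ) (1 - δ), (1 - x) ^ α * q.eval x ^ 2) +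
      (∫ x in Ioc (1 - δ) (1 : ℝ), (1 - x) ^ α * q.eval x ^ 2) ≤
      w * A + 128 * Real.exp 3 * (1 + Real.exp 2) * (16 : ℝ) ^ β * w * A :=
        add_le_add hpiece1 hpiece2
    _ = (1 + 128 * Real.exp 3 * (1 + Real.exp 2) * (16 : ℝ) ^ β) * w * A := by ring

lemma natDegree_comp_neg (q : Polynomial ℝ) :
    (q.comp (-Polynomial.X)).natDegree ≤ q.natDegree := by
  refine le_trans Polynomial.natDegree_comp_le ?_
  have h1 : (-Polynomial.X : Polynomial ℝ).natDegree = 1 := by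
    rw [Polynomial.natDegree_neg, Polynomial.natDegree_X]
  rw [h1, mul_one]

lemma mirror_integral (q : Polynomial ℝ) (γ : ℝ) :
    ∫ x in Icc (-1 : ℝ) 1, (1 + x) ^ γ * q.eval x ^ 2 =
      ∫ x in Icc (-1 : ℝ) 1, (1 - x) ^ γ * (q.comp (-Polynomial.X)).eval x ^ 2 := by
  have hev : ∀ x : ℝ, (q.comp (-Polynomial.X)).eval x = q.eval (-x) := by
    intro x; simp [Polynomial.eval_comp]
  have hfun : (fun x : ℝ => (1 + x) ^ γ * q.eval x ^ 2) =
      fun x : ℝ =>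
        ((fun y : ℝ => (1 - y) ^ γ * (q.comp (-Polynomial.X)).eval y ^ 2) (-x)) := by
    funext x
    simp only [hev, neg_neg, sub_neg_eq_add]
  rw [integral_Icc_eq_integral_Ioc, integral_Icc_eq_integral_Ioc,
    ← intervalIntegral.integral_of_le (by norm_num : (-1:ℝ) ≤ 1),
    ← intervalIntegral.integral_of_le (by norm_num : (-1:ℝ) ≤ 1), hfun]
  have h := intervalIntegral.integral_comp_neg (a := (-1:ℝ)) (b := 1)
    (f := fun y : ℝ => (1 - y) ^ γ * (q.comp (-Polynomial.X)).eval y ^ 2)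
  simpa using h

end

end OneSidedBubble

open OneSidedBubble in
/-- $hp$-explicit 1D polynomial inverse estimates with the
one-sided bubble weights $(1-x)$ and $(1+x)$ (second pair of inequalities of
Lemma 3.3 of the paper). -/
theorem one_sided_bubble_inverse_estimates_1D :
    ∀ α β : ℝ, 0 ≤ α → α ≤ β →
      ∃ c : ℝ, 0 < c ∧
        ∀ p : ℕ, 1 ≤ p → ∀ q : Polynomial ℝ, q.natDegree ≤ p →
          (∫ x in Set.Icc (-1 : ℝ) 1, (1 - x) ^ α * (q.eval x) ^ 2 ≤
            c * (p : ℝ) ^ (2 * (β - α)) *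
              ∫ x in Set.Icc (-1 : ℝ) 1, (1 - x) ^ β * (q.eval x) ^ 2) ∧
          (∫ x in Set.Icc (-1 : ℝ) 1, (1 + x) ^ α * (q.eval x) ^ 2 ≤
            c * (p : ℝ) ^ (2 * (β - α)) *
              ∫ x in Set.Icc (-1 : ℝ) 1, (1 + x) ^ β * (q.eval x) ^ 2) := by
  intro α β hα hαβ
  refine ⟨1 + 128 * Real.exp 3 * (1 + Real.exp 2) * (16 : ℝ) ^ β, ?_, ?_⟩
  · have h16 : (0:ℝ) < (16:ℝ) ^ β := Real.rpow_pos_of_pos (by norm_num) β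
    positivity
  intro p hp q hq
  constructor
  · exact one_sided hα hαβ hp hq
  · rw [mirror_integral q α, mirror_integral q β]
    exact one_sided hα hαβ hp ((natDegree_comp_neg q).trans hq)
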